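/- Let g be a nilpotent Lie algebra with Jordan-Hölder basis X₁,...,X_m (gⱼ := span{X₁,...,Xⱼ} satisfy [g,gⱼ] ⊆ g_{j−1}), ξ₀ ∈ g*, and e = {j : Xⱼ ∉ g_{j−1} + g_{ξ₀}} the set of jump indices. Setting g_e := span{Xⱼ : j ∈ e}, one has the direct sum decomposition g = g_{ξ₀} ⊕ g_e of vector spaces. -/

import Mathlib

/-- The coadjoint isotropy algebra `g_ξ = {X ∈ g : ξ([X,g]) = 0}`. -/
def isotropy {L : Type*} [LieRing L] [LieAlgebra ℝ L] (ξ : L →ₗ[ℝ] ℝ) :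
    Submodule ℝ L where
  carrier := {X | ∀ Y : L, ξ ⁅X, Y⁆ = 0}
  add_mem' := by
    intro a b ha hb Y
    rw [add_lie, map_add, ha Y, hb Y, add_zero]
  zero_mem' := by
    intro Y
    rw [zero_lie, map_zero]
  smul_mem' := by
    intro c a ha Y
    rw [smul_lie, map_smul, ha Y, smul_zero]

/-- For a nilpotent Lie algebra with Jordan–Hölder basis
`X₁, …, X_m` (here `X : Fin m → L`, 0-indexed, with flag `F j = span{X i : i < j}`
and `[g, F j] ⊆ F (j−1)`), `ξ₀ ∈ g*`, and `g_e` the span of the jump-index basis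
vectors, one has the direct sum decomposition `g = g_{ξ₀} ⊕ g_e`. -/
theorem isotropy_jump_complement
    {L : Type*} [LieRing L] [LieAlgebra ℝ L] [Module.Finite ℝ L]
    [LieRing.IsNilpotent L]
    {m : ℕ} (X : Fin m → L)
    (hLI : LinearIndependent ℝ X)
    (hspan : Submodule.span ℝ (Set.range X) = ⊤)
    (F : ℕ → Submodule ℝ L)
    (hF : ∀ j : ℕ, F j = Submodule.span ℝ (X '' {i : Fin m | (i : ℕ) < j}))
    (hideal : ∀ j : ℕ, ∀ x : L, ∀ y ∈ F (j + 1), ⁅x, y⁆ ∈ F j)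
    (ξ₀ : L →ₗ[ℝ] ℝ) :
    isotropy ξ₀ ⊓
        Submodule.span ℝ (X '' {j : Fin m | X j ∉ F (j : ℕ) ⊔ isotropy ξ₀}) = ⊥ ∧
      isotropy ξ₀ ⊔
        Submodule.span ℝ (X '' {j : Fin m | X j ∉ F (j : ℕ) ⊔ isotropy ξ₀}) = ⊤ := by
  set G := isotropy ξ₀ with hG
  set e : Set (Fin m) := {j : Fin m | X j ∉ F (j : ℕ) ⊔ isotropy ξ₀} with he
  set S := Submodule.span ℝ (X '' e) with hS
  have hXF : ∀ (k : ℕ) (i : Fin m), (i : ℕ) < k → X i ∈ F k := by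
    intro k i hi
    rw [hF]
    exact Submodule.subset_span ⟨i, hi, rfl⟩
  constructor
  · rw [Submodule.eq_bot_iff]
    rintro v ⟨hvG, hvS⟩
    by_contra hv0
    rw [SetLike.mem_coe, Finsupp.mem_span_image_iff_linearCombination] at hvS
    obtain ⟨l, hl, hlv⟩ := hvS
    have hsupp : l.support.Nonempty := by
      rcases Finset.eq_empty_or_nonempty l.support with h | h
      · exfalso
        apply hv0
        rw [← hlv, Finsupp.linearCombination_apply, Finsupp.sum, h, Finset.sum_empty]
      · exact h
    obtain ⟨k, hk, hkmax⟩ := l.support.exists_max_image id hsupp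
    have hke : k ∈ e := hl hk
    apply hke
    have hv : v = l k • X k + ∑ i ∈ l.support.erase k, l i • X i := by
      rw [← hlv, Finsupp.linearCombination_apply, Finsupp.sum,
        ← Finset.add_sum_erase _ _ hk]
    have hsum : (∑ i ∈ l.support.erase k, l i • X i) ∈ F (k : ℕ) ⊔ G := by
      apply Submodule.mem_sup_left
      apply Submodule.sum_mem
      intro i hi
      have hik : i ∈ l.support := Finset.mem_of_mem_erase hi
      have hlt : (i : ℕ) < (k : ℕ) := by
        have := hkmax i hik
        have hne : i ≠ k := Finset.ne_of_mem_erase hi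
        exact (Fin.lt_iff_val_lt_val.mp (lt_of_le_of_ne this hne))
      exact Submodule.smul_mem _ _ (hXF _ _ hlt)
    have hkXk : l k • X k ∈ F (k : ℕ) ⊔ G := by
      have : l k • X k = v - ∑ i ∈ l.support.erase k, l i • X i := by
        rw [hv]; abel
      rw [this]
      exact Submodule.sub_mem _ (Submodule.mem_sup_right hvG) hsum
    have hlk : l k ≠ 0 := Finsupp.mem_support_iff.mp hk
    have : X k = (l k)⁻¹ • (l k • X k) := by
      rw [smul_smul, inv_mul_cancel₀ hlk, one_smul]
    rw [this]
    exact Submodule.smul_mem _ _ hkXk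
  · have key : ∀ j : ℕ, F j ≤ G ⊔ S := by
      intro j
      induction j with
      | zero =>
        rw [hF]
        have : {i : Fin m | (i : ℕ) < 0} = ∅ := by
          ext i; simp
        rw [this, Set.image_empty, Submodule.span_empty]
        exact bot_le
      | succ j ih =>
        rw [hF, Submodule.span_le]
        rintro _ ⟨i, hi, rfl⟩
        rcases lt_or_eq_of_le (Nat.lt_succ_iff.mp hi) with h | h
        · exact ih (hXF _ _ h)
        · by_cases hie : i ∈ e
          · exact Submodule.mem_sup_right (Submodule.subset_span ⟨i, hie, rfl⟩)
          · have hX : X i ∈ F (i : ℕ) ⊔ G := not_not.mp hie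
            rcases Submodule.mem_sup.mp hX with ⟨a, ha, b, hb, hab⟩
            rw [← hab]
            exact Submodule.add_mem _ (ih (by rwa [h] at ha))
              (Submodule.mem_sup_left hb)
    rw [eq_top_iff]
    intro x _
    apply key m
    rw [hF]
    have : {i : Fin m | (i : ℕ) < m} = Set.univ := by
      ext i; simp [i.isLt]
    rw [this, Set.image_univ, hspan]
    trivial
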